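/- Define the convolution product on A₋₁,₀ = M ∩ γ(M)' by a * b := w₋₁* a γ(b) w₋₁. Then for all a, b ∈ A₋₁,₀, the element a * b again lies in A₋₁,₀ = M ∩ γ(M)'. -/
import Mathlib


/-- The convolution product `a * b := w₋₁* a γ(b) w₋₁` maps the
relative commutant `A₋₁,₀ = M ∩ γ(M)'` into itself: for `a, b ∈ A₋₁,₀`, the
element `a * b` again lies in `M` and commutes with `γ(M)`. (`wm1 = w₋₁`.) -/
theorem convolution_closed
    {B : Type*} [Ring B] [StarRing B] [Algebra ℂ B] [StarModule ℂ B]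
    (M N : StarSubalgebra ℂ B) (hNM : N ≤ M)
    (γ : B →⋆ₐ[ℂ] B) (hγM : ∀ m ∈ M, γ m ∈ N)
    (wm1 : B) (hwN : wm1 ∈ N) (hiso : star wm1 * wm1 = 1)
    (hintN : ∀ n ∈ N, wm1 * n = γ n * wm1) :
    ∀ a ∈ M, (∀ m ∈ M, a * γ m = γ m * a) →
      ∀ b ∈ M, (∀ m ∈ M, b * γ m = γ m * b) →
        (star wm1 * a * γ b * wm1 ∈ M ∧
          ∀ m ∈ M, (star wm1 * a * γ b * wm1) * γ m
            = γ m * (star wm1 * a * γ b * wm1)) := by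
  intro a ha hacomm b hb hbcomm
  have hwM : wm1 ∈ M := hNM hwN
  constructor
  · exact M.mul_mem (M.mul_mem (M.mul_mem (M.star_mem' hwM) ha) (hNM (hγM b hb))) hwM
  · intro m hm
    have hgmN : γ m ∈ N := hγM m hm
    have hw_gm : wm1 * γ m = γ (γ m) * wm1 := hintN (γ m) hgmN
    have hstar : γ m * star wm1 = star wm1 * γ (γ m) := by
      have h := hintN (star (γ m)) (N.star_mem' hgmN)
      have h2 := congrArg star h
      simpa [map_star, star_mul] using h2
    have acomm : a * γ (γ m) = γ (γ m) * a := hacomm (γ m) (hNM hgmN)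
    have bcomm : γ b * γ (γ m) = γ (γ m) * γ b := by
      have := congrArg γ (hbcomm m hm)
      simpa [map_mul] using this
    calc star wm1 * a * γ b * wm1 * γ m
        = star wm1 * (a * (γ b * (wm1 * γ m))) := by noncomm_ring
      _ = star wm1 * (a * (γ b * γ (γ m) * wm1)) := by rw [hw_gm, mul_assoc]
      _ = star wm1 * (a * γ (γ m) * (γ b * wm1)) := by rw [bcomm]; noncomm_ring
      _ = star wm1 * γ (γ m) * (a * (γ b * wm1)) := by rw [← mul_assoc, ← mul_assoc, acomm]; noncomm_ring
      _ = γ m * star wm1 * (a * (γ b * wm1)) := by rw [← hstar]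
      _ = γ m * (star wm1 * a * γ b * wm1) := by noncomm_ring
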